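/- arXiv:1806.00569 — 6 statements merged into one kernel-verified Lean document; each statement's English description precedes it below -/
import Mathlib

section
/- Abstract form of Theorem 1(i) (consistency of the garrote parameters for the relevant variables). Let 1 ≤ s ≤ d and ξ* := (1,…,1,0,…,0) ∈ [0,1]^d with its first s coordinates equal to 1 and the remaining d−s coordinates equal to 0. Let M : [0,1]^d → ℝ satisfy: (independence) M(ξ) depends only on the first s coordinates of ξ, i.e. M(ξ₁,ξ₀) = M(ξ₁,0) for all ξ₁ ∈ [0,1]^s and ξ₀ ∈ [0,1]^{d−s}; (well-separation) for every ε > 0, M(ξ*) < inf{ M(ξ₁,0) : ξ₁ ∈ [0,1]^s, ‖ξ₁ − (1,…,1)‖ ≥ ε }. Let (η_n) be nonnegative reals with η_n → 0. On a probability space (Ω,P), let M_n : Ω × [0,1]^d → ℝ be random functions such that the random variables sup_{ξ∈[0,1]^d} |M_n(ω,ξ) − M(ξ)| converge to 0 in probability, and let ξ̂_n : Ω → [0,1]^d be measurable maps such that for every ω, ξ̂_n(ω) minimizes ξ ↦ M_n(ω,ξ) + η_n·∑_{i=1}^d ξ_i over [0,1]^d. Then the vector of the first s coordinates of ξ̂_n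 converges in probability to (1,…,1) ∈ ℝ^s, i.e., for every ε > 0, P( ‖(first s coordinates of ξ̂_n) − (1,…,1)‖ ≥ ε ) → 0 as n → ∞. -/
open MeasureTheory Filter Topology

/-- Abstract form of Theorem 1(i): consistency of the garrote parameters for the
relevant variables. The target function depends only on the first `s` variables,
`M` is the (population) loss with well-separated minimizer
`ξ* = (1,…,1,0,…,0)`, `M_n` are random empirical losses converging uniformly to `M`
in probability, `ξ̂_n` minimizes the `ℓ¹`-penalized empirical loss with penalty level
`η_n → 0`; then the first `s` coordinates of `ξ̂_n` converge in probability to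
`(1,…,1)`. -/
theorem garrote_relevant_consistency
    (d s : ℕ) (hs1 : 1 ≤ s) (hsd : s ≤ d)
    (M : (Fin d → ℝ) → ℝ)
    (hindep : ∀ ξ : Fin d → ℝ, (∀ i, ξ i ∈ Set.Icc (0:ℝ) 1) →
      M ξ = M fun i => if (i : ℕ) < s then ξ i else 0)
    (hsep : ∀ ε : ℝ, 0 < ε →
      ((M fun i : Fin d => if (i : ℕ) < s then (1:ℝ) else 0) : EReal) <
        ⨅ ξ₁ ∈ {ξ₁ : Fin d → ℝ |
            (∀ i, ξ₁ i ∈ Set.Icc (0:ℝ) 1) ∧ (∀ i : Fin d, s ≤ (i : ℕ) → ξ₁ i = 0) ∧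
            ε ≤ Real.sqrt (∑ i ∈ Finset.univ.filter fun i : Fin d => (i : ℕ) < s,
                  (ξ₁ i - 1) ^ 2)},
          ((M ξ₁ : ℝ) : EReal))
    (Ω : Type*) [MeasurableSpace Ω] (P : Measure Ω) [IsProbabilityMeasure P]
    (Mn : ℕ → Ω → (Fin d → ℝ) → ℝ)
    (hMconv : ∀ ε : ℝ, 0 < ε →
      Tendsto (fun n => P {ω | ∃ ξ : Fin d → ℝ, (∀ i, ξ i ∈ Set.Icc (0:ℝ) 1) ∧
        ε ≤ |Mn n ω ξ - M ξ|}) atTop (𝓝 0))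
    (η : ℕ → ℝ) (hη0 : ∀ n, 0 ≤ η n) (hη : Tendsto η atTop (𝓝 0))
    (ξhat : ℕ → Ω → Fin d → ℝ) (hmeas : ∀ n, Measurable (ξhat n))
    (hbox : ∀ n ω i, ξhat n ω i ∈ Set.Icc (0:ℝ) 1)
    (hmin : ∀ n ω, ∀ ξ : Fin d → ℝ, (∀ i, ξ i ∈ Set.Icc (0:ℝ) 1) →
      Mn n ω (ξhat n ω) + η n * ∑ i, ξhat n ω i ≤ Mn n ω ξ + η n * ∑ i, ξ i) :
    ∀ ε : ℝ, 0 < ε →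
      Tendsto (fun n => P {ω |
          ε ≤ Real.sqrt (∑ i ∈ Finset.univ.filter fun i : Fin d => (i : ℕ) < s,
                (ξhat n ω i - 1) ^ 2)})
        atTop (𝓝 0) := by
  intro ε hε
  set ξstar : Fin d → ℝ := fun i => if (i : ℕ) < s then (1:ℝ) else 0 with hξstar
  have hboxstar : ∀ i, ξstar i ∈ Set.Icc (0:ℝ) 1 := by
    intro i; by_cases h : (i : ℕ) < s <;> simp [ξstar, h]
  obtain ⟨z, hz1, hz2⟩ := exists_between (hsep ε hε)
  have hzT : z ≠ ⊤ := (hz2.trans_le le_top).ne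
  have hzB : z ≠ ⊥ := ((EReal.bot_lt_coe _).trans hz1).ne'
  set c : ℝ := z.toReal with hc
  have hcz : (c : EReal) = z := EReal.coe_toReal hzT hzB
  have hc1 : M ξstar < c := by
    have := hz1; rw [← hcz] at this; exact_mod_cast this
  have hc2 : ∀ ξ₁ : Fin d → ℝ, (∀ i, ξ₁ i ∈ Set.Icc (0:ℝ) 1) →
      (∀ i : Fin d, s ≤ (i : ℕ) → ξ₁ i = 0) →
      ε ≤ Real.sqrt (∑ i ∈ Finset.univ.filter fun i : Fin d => (i : ℕ) < s,
            (ξ₁ i - 1) ^ 2) → c ≤ M ξ₁ := by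
    intro ξ₁ h1 h2 h3
    have hle : (⨅ ξ₁ ∈ {ξ₁ : Fin d → ℝ |
            (∀ i, ξ₁ i ∈ Set.Icc (0:ℝ) 1) ∧ (∀ i : Fin d, s ≤ (i : ℕ) → ξ₁ i = 0) ∧
            ε ≤ Real.sqrt (∑ i ∈ Finset.univ.filter fun i : Fin d => (i : ℕ) < s,
                  (ξ₁ i - 1) ^ 2)},
          ((M ξ₁ : ℝ) : EReal)) ≤ ((M ξ₁ : ℝ) : EReal) :=
      iInf₂_le ξ₁ ⟨h1, h2, h3⟩
    have := (hz2.le.trans hle)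
    rw [← hcz] at this; exact_mod_cast this
  set δ : ℝ := (c - M ξstar) / 4 with hδdef
  have hδ : 0 < δ := by simp only [hδdef]; linarith
  have hηd : ∀ᶠ n in atTop, η n * d < δ := by
    have hm : Tendsto (fun n => η n * (d : ℝ)) atTop (𝓝 0) := by
      simpa using hη.mul_const (d : ℝ)
    exact hm.eventually_lt_const hδ
  have key : ∀ᶠ n in atTop, P {ω |
      ε ≤ Real.sqrt (∑ i ∈ Finset.univ.filter fun i : Fin d => (i : ℕ) < s,
            (ξhat n ω i - 1) ^ 2)} ≤
      P {ω | ∃ ξ : Fin d → ℝ, (∀ i, ξ i ∈ Set.Icc (0:ℝ) 1) ∧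
        δ ≤ |Mn n ω ξ - M ξ|} := by
    filter_upwards [hηd] with n hn
    apply measure_mono
    intro ω hω
    simp only [Set.mem_setOf_eq] at hω ⊢
    by_contra hcon
    push_neg at hcon
    set ξh : Fin d → ℝ := ξhat n ω with hξh
    set ξ' : Fin d → ℝ := fun i => if (i : ℕ) < s then ξh i else 0 with hξ'
    have hboxh : ∀ i, ξh i ∈ Set.Icc (0:ℝ) 1 := hbox n ω
    have hbox' : ∀ i, ξ' i ∈ Set.Icc (0:ℝ) 1 := by
      intro i; by_cases h : (i : ℕ) < s
      · simpa [ξ', h] using hboxh i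
      · simp [ξ', h]
    have h1 : M ξh = M ξ' := hindep ξh hboxh
    have h2 : |Mn n ω ξh - M ξh| < δ := hcon ξh hboxh
    have h3 : |Mn n ω ξstar - M ξstar| < δ := hcon ξstar hboxstar
    have hsum1 : (0:ℝ) ≤ ∑ i, ξh i :=
      Finset.sum_nonneg fun i _ => (hboxh i).1
    have hsum2 : (∑ i, ξstar i) ≤ d := by
      calc (∑ i, ξstar i) ≤ ∑ _i : Fin d, (1:ℝ) :=
            Finset.sum_le_sum fun i _ => (hboxstar i).2
        _ = d := by simp
    have hchain : M ξ' < c := by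
      have e2 : M ξh ≤ Mn n ω ξh + δ := by
        have := abs_lt.mp h2; linarith [this.1]
      have e3 : Mn n ω ξstar ≤ M ξstar + δ := by
        have := abs_lt.mp h3; linarith [this.2]
      have e4 : Mn n ω ξh + η n * ∑ i, ξh i ≤ Mn n ω ξstar + η n * ∑ i, ξstar i :=
        hmin n ω ξstar hboxstar
      have e5 : η n * ∑ i, ξstar i ≤ η n * d :=
        mul_le_mul_of_nonneg_left hsum2 (hη0 n)
      have e6 : 0 ≤ η n * ∑ i, ξh i := mul_nonneg (hη0 n) hsum1
      have : M ξ' ≤ M ξstar + 2 * δ + η n * d := by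
        rw [← h1]; linarith
      simp only [hδdef] at hn this ⊢
      linarith
    have hzero : ∀ i : Fin d, s ≤ (i : ℕ) → ξ' i = 0 := by
      intro i hi; simp [ξ', Nat.not_lt.mpr hi]
    have hdist : ε ≤ Real.sqrt (∑ i ∈ Finset.univ.filter fun i : Fin d => (i : ℕ) < s,
        (ξ' i - 1) ^ 2) := by
      have : (∑ i ∈ Finset.univ.filter fun i : Fin d => (i : ℕ) < s, (ξ' i - 1) ^ 2)
          = ∑ i ∈ Finset.univ.filter fun i : Fin d => (i : ℕ) < s, (ξh i - 1) ^ 2 := by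
        apply Finset.sum_congr rfl
        intro i hi
        simp only [Finset.mem_filter] at hi
        simp [ξ', hi.2]
      rw [this]; exact hω
    exact absurd (hc2 ξ' hbox' hzero hdist) (not_le.mpr hchain)
  exact tendsto_of_tendsto_of_tendsto_of_le_of_le' tendsto_const_nhds (hMconv δ hδ)
    (Eventually.of_forall fun n => zero_le) key
end

section
/- Abstract form of Theorem 1(ii) (exact exclusion of the irrelevant variables). Let 1 ≤ s ≤ d and let (η_n) be strictly positive reals. On a probability space (Ω,P), let M_n : Ω × [0,1]^d → ℝ be random functions that for every ω are differentiable in ξ on [0,1]^d (one-sided derivatives at the boundary), with gradient ∇_ξ M_n. Let ξ̂_n : Ω → [0,1]^d be measurable maps satisfying, for every ω, the first-order local optimality condition ( ∇_ξ M_n(ω, ξ̂_n(ω)) + η_n·(1,…,1) )ᵀ ( c − ξ̂_n(ω) ) ≥ 0 for all c ∈ [0,1]^d. Assume that the random variables D_n := max_{s < i ≤ d} sup_{ξ ∈ [0,1]^d} |∂M_n/∂ξ_i (ω, ξ)| satisfy D_n/η_n → 0 in probability. Then P( the i-th coordinate of ξ̂_n equals 0 for every i with s < i ≤ d ) → 1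 as n → ∞. -/
open MeasureTheory Filter Topology
open scoped ENNReal

/-- Abstract form of Theorem 1(ii): exact exclusion of the irrelevant variables.
`M_n` are random differentiable empirical losses on `[0,1]^d` with gradients `G n ω`,
`ξ̂_n ∈ [0,1]^d` satisfies the first-order optimality condition of the `ℓ¹`-penalized
problem with penalty `η_n > 0`, and the maximum over the irrelevant coordinates
`i > s` of the uniform norms of `∂M_n/∂ξ_i` is `o_P(η_n)`; then, with probability
tending to one, all irrelevant coordinates of `ξ̂_n` are exactly zero. -/
theorem garrote_irrelevant_exclusion
    (d s : ℕ) (hs1 : 1 ≤ s) (hsd : s ≤ d)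
    (Ω : Type*) [MeasurableSpace Ω] (P : Measure Ω) [IsProbabilityMeasure P]
    (η : ℕ → ℝ) (hη : ∀ n, 0 < η n)
    (Mn : ℕ → Ω → (Fin d → ℝ) → ℝ)
    (G : ℕ → Ω → (Fin d → ℝ) → (Fin d → ℝ))
    (hdiff : ∀ n ω, ∀ ξ : Fin d → ℝ, (∀ i, ξ i ∈ Set.Icc (0:ℝ) 1) →
      HasFDerivWithinAt (Mn n ω)
        (∑ i, G n ω ξ i • (ContinuousLinearMap.proj i : (Fin d → ℝ) →L[ℝ] ℝ))
        {ζ : Fin d → ℝ | ∀ i, ζ i ∈ Set.Icc (0:ℝ) 1} ξ)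
    (ξhat : ℕ → Ω → Fin d → ℝ) (hmeas : ∀ n, Measurable (ξhat n))
    (hbox : ∀ n ω i, ξhat n ω i ∈ Set.Icc (0:ℝ) 1)
    (hopt : ∀ n ω, ∀ c : Fin d → ℝ, (∀ i, c i ∈ Set.Icc (0:ℝ) 1) →
      0 ≤ ∑ i, (G n ω (ξhat n ω) i + η n) * (c i - ξhat n ω i))
    (hD : ∀ ε : ℝ, 0 < ε →
      Tendsto (fun n => P {ω | ∃ i : Fin d, s ≤ (i : ℕ) ∧ ∃ ξ : Fin d → ℝ,
        (∀ j, ξ j ∈ Set.Icc (0:ℝ) 1) ∧ ε * η n ≤ |G n ω ξ i|}) atTop (𝓝 0)) :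
    Tendsto (fun n => P {ω | ∀ i : Fin d, s ≤ (i : ℕ) → ξhat n ω i = 0})
      atTop (𝓝 1) := by
  set bad : ℕ → Set Ω := fun n => {ω | ∃ i : Fin d, s ≤ (i : ℕ) ∧ ∃ ξ : Fin d → ℝ,
      (∀ j, ξ j ∈ Set.Icc (0:ℝ) 1) ∧ (1/2 : ℝ) * η n ≤ |G n ω ξ i|} with hbad
  have key : ∀ n ω, ω ∉ bad n → ∀ i : Fin d, s ≤ (i : ℕ) → ξhat n ω i = 0 := by
    intro n ω hω i hi
    set x := ξhat n ω with hx
    have hsmall : ∀ j : Fin d, s ≤ (j : ℕ) → |G n ω x j| < (1/2 : ℝ) * η n := by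
      intro j hj
      by_contra hcon
      push_neg at hcon
      exact hω ⟨j, hj, x, hbox n ω, hcon⟩
    have hpos : ∀ j : Fin d, s ≤ (j : ℕ) → 0 < G n ω x j + η n := by
      intro j hj
      have h1 := (abs_lt.mp (hsmall j hj)).1
      have := hη n
      linarith
    set c : Fin d → ℝ := fun j => if s ≤ (j : ℕ) then 0 else x j with hc
    have hcbox : ∀ j, c j ∈ Set.Icc (0:ℝ) 1 := by
      intro j
      by_cases hj : s ≤ (j : ℕ)
      · simp [hc, hj]
      · simpa [hc, hj] using hbox n ω j
    have hopt' := hopt n ω c hcbox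
    have hterm : ∀ j ∈ Finset.univ, (G n ω x j + η n) * (c j - x j) ≤ 0 := by
      intro j _
      by_cases hj : s ≤ (j : ℕ)
      · have h1 := hpos j hj
        have h2 := (hbox n ω j).1
        simp only [hc, if_pos hj]
        nlinarith
      · simp [hc, hj]
    have hsum0 : ∑ j, (G n ω x j + η n) * (c j - x j) = 0 :=
      le_antisymm (Finset.sum_nonpos hterm) hopt'
    have hzero := (Finset.sum_eq_zero_iff_of_nonpos hterm).mp hsum0 i (Finset.mem_univ i)
    have hcz : c i = 0 := by simp [hc, hi]
    rw [hcz] at hzero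
    have hp := hpos i hi
    have hx0 := (hbox n ω i).1
    nlinarith
  have hsub : ∀ n, (bad n)ᶜ ⊆ {ω | ∀ i : Fin d, s ≤ (i : ℕ) → ξhat n ω i = 0} :=
    fun n ω hω => key n ω hω
  have hlow : ∀ n, 1 - P (bad n) ≤ P {ω | ∀ i : Fin d, s ≤ (i : ℕ) → ξhat n ω i = 0} := by
    intro n
    rw [tsub_le_iff_right]
    calc (1 : ℝ≥0∞) = P Set.univ := (measure_univ).symm
      _ ≤ P ((bad n)ᶜ ∪ bad n) := by rw [Set.compl_union_self]
      _ ≤ P (bad n)ᶜ + P (bad n) := measure_union_le _ _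
      _ ≤ P {ω | ∀ i : Fin d, s ≤ (i : ℕ) → ξhat n ω i = 0} + P (bad n) := by
          exact add_le_add (measure_mono (hsub n)) le_rfl
  have hD' := hD (1/2) (by norm_num)
  have hlowt : Tendsto (fun n => 1 - P (bad n)) atTop (𝓝 1) := by
    have h1 : Tendsto (fun _ : ℕ => (1 : ℝ≥0∞)) atTop (𝓝 1) := tendsto_const_nhds
    have := ENNReal.Tendsto.sub h1 hD' (Or.inl ENNReal.one_ne_top)
    simpa only [tsub_zero] using this
  refine tendsto_of_tendsto_of_tendsto_of_le_of_le hlowt tendsto_const_nhds hlow ?_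
  intro n
  exact prob_le_one
end

section
/- Deterministic core of Lemma 4(i). Let Z ⊆ (−1,1)^d be a nonempty set satisfying the contraction condition ξ∘z ∈ Z for all z ∈ Z and ξ ∈ [0,1]^d, and write ‖f_c‖_∞ := sup_{z∈Z} |f_c(z)|. Let κ > 0 satisfy, for every z ∈ Z: ∑_α w α · z^{2α}/(α!)² ≤ κ² and, for each i ∈ Fin d, ∑_α w α · ( (α i) · z^{α − e_i} )² / (α!)² ≤ κ², where e_i is the i-th unit multi-index and terms with α i = 0 are read as 0. Let Ĉ be a linear map from H to H and ĝ ∈ H, and let β > 0 be such that |⟨c, Ĉ c'⟩| ≤ β‖f_c‖_∞‖f_{c'}‖_∞ and |⟨c, ĝ⟩| ≤ β‖f_c‖_∞ for all c, c' ∈ H. For ξ ∈ (0,1)^d, i ∈ Fin d and c ∈ H, set D̂_i(ξ; c) := ½⟨D_i(ξ)c, Ĉ(S_ξ c)⟩ + ½⟨S_ξ c, Ĉ(D_i(ξ)c)⟩ − ⟨ĝ, D_i(ξ)c⟩. Then for all f̂, f* ∈ H and every i ∈ Fin d: sup_{ξ∈(0,1)^d} |D̂_i(ξ; f̂) − D̂_i(ξ;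 f*)| ≤ ( κ²β(‖f̂‖ + ‖f*‖) + κβ )·‖f̂ − f*‖. -/
open MeasureTheory Filter Topology

noncomputable section

/-- Factorial `α!` of a multi-index `α : Fin d → ℕ`. -/
def mfact {d : ℕ} (α : Fin d → ℕ) : ℝ := ∏ i, (Nat.factorial (α i) : ℝ)

/-- Membership in the native space `H` of the power series kernel with weights `w`:
the coefficients vanish where the weights do, and the weighted square sum is finite. -/
def memH {d : ℕ} (w : (Fin d → ℕ) → ℝ) (c : (Fin d → ℕ) → ℝ) : Prop :=
  (∀ α, w α = 0 → c α = 0) ∧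
    Summable (fun α : Fin d → ℕ => mfact α ^ 2 * c α ^ 2 / w α)

/-- Inner product `⟨c, c'⟩` on the native space (terms with `w α = 0` vanish since
division by zero is zero). -/
def innerH {d : ℕ} (w : (Fin d → ℕ) → ℝ) (c c' : (Fin d → ℕ) → ℝ) : ℝ :=
  ∑' α : Fin d → ℕ, mfact α ^ 2 * c α * c' α / w α

/-- Norm on the native space. -/
def normH {d : ℕ} (w : (Fin d → ℕ) → ℝ) (c : (Fin d → ℕ) → ℝ) : ℝ :=
  Real.sqrt (innerH w c c)

/-- The scaling operator `S_ξ`, `(S_ξ c) α = ξ^α · c α`. -/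
def Sscale {d : ℕ} (ξ : Fin d → ℝ) (c : (Fin d → ℕ) → ℝ) : (Fin d → ℕ) → ℝ :=
  fun α => (∏ i, ξ i ^ α i) * c α

/-- The scaling-derivative sequence `D_i(ξ) c`,
`(D_i(ξ)c) α = (α i)·(ξ i)^(α i − 1)·(∏_{j≠i} (ξ j)^(α j))·(c α)`
(the factor is `0` when `α i = 0`, as enforced by the factor `(α i : ℝ)`). -/
def Dscale {d : ℕ} (i : Fin d) (ξ : Fin d → ℝ) (c : (Fin d → ℕ) → ℝ) : (Fin d → ℕ) → ℝ :=
  fun α => (α i : ℝ) * ξ i ^ (α i - 1) * (∏ j ∈ Finset.univ.erase i, ξ j ^ α j) * c α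

/-- A bounded linear operator on the native space: maps `H` to `H`, is linear on `H`,
and is bounded on `H`. -/
def IsBoundedOpH {d : ℕ} (w : (Fin d → ℕ) → ℝ)
    (A : ((Fin d → ℕ) → ℝ) → ((Fin d → ℕ) → ℝ)) : Prop :=
  (∀ c, memH w c → memH w (A c)) ∧
  (∀ (a : ℝ) (c c' : (Fin d → ℕ) → ℝ), memH w c → memH w c' →
      A (a • c + c') = a • A c + A c') ∧
  (∃ M : ℝ, 0 ≤ M ∧ ∀ c, memH w c → normH w (A c) ≤ M * normH w c)

/-- Operator norm on the native space: the least bound constant. -/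
def opNormH {d : ℕ} (w : (Fin d → ℕ) → ℝ)
    (A : ((Fin d → ℕ) → ℝ) → ((Fin d → ℕ) → ℝ)) : ℝ :=
  sInf {M : ℝ | 0 ≤ M ∧ ∀ c, memH w c → normH w (A c) ≤ M * normH w c}

/-- The quadratic loss `Q_{A,g}(ξ; c) = ½⟨S_ξ c, A (S_ξ c)⟩ − ⟨g, S_ξ c⟩`. -/
def quadLoss {d : ℕ} (w : (Fin d → ℕ) → ℝ)
    (A : ((Fin d → ℕ) → ℝ) → ((Fin d → ℕ) → ℝ)) (g : (Fin d → ℕ) → ℝ)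
    (ξ : Fin d → ℝ) (c : (Fin d → ℕ) → ℝ) : ℝ :=
  (1/2) * innerH w (Sscale ξ c) (A (Sscale ξ c)) - innerH w g (Sscale ξ c)

/-- The ξ_i-derivative of the quadratic loss:
`½⟨D_i(ξ)c, A(S_ξ c)⟩ + ½⟨S_ξ c, A(D_i(ξ)c)⟩ − ⟨g, D_i(ξ)c⟩`. -/
def quadLossDeriv {d : ℕ} (w : (Fin d → ℕ) → ℝ)
    (A : ((Fin d → ℕ) → ℝ) → ((Fin d → ℕ) → ℝ)) (g : (Fin d → ℕ) → ℝ)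
    (i : Fin d) (ξ : Fin d → ℝ) (c : (Fin d → ℕ) → ℝ) : ℝ :=
  (1/2) * innerH w (Dscale i ξ c) (A (Sscale ξ c))
    + (1/2) * innerH w (Sscale ξ c) (A (Dscale i ξ c))
    - innerH w g (Dscale i ξ c)

/-- The function represented by a coefficient sequence: `f_c(x) = ∑_α (c α)·x^α`. -/
def evalF {d : ℕ} (c : (Fin d → ℕ) → ℝ) (x : Fin d → ℝ) : ℝ :=
  ∑' α : Fin d → ℕ, c α * ∏ i, x i ^ α i

/-- Sup norm of the represented function on a set `Z`. -/
def supNormOn {d : ℕ} (Z : Set (Fin d → ℝ)) (c : (Fin d → ℕ) → ℝ) : ℝ :=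
  ⨆ z : Z, |evalF c (z : Fin d → ℝ)|

section Lemma4Aux

variable {d : ℕ}

lemma mfact_pos (α : Fin d → ℕ) : 0 < mfact α :=
  Finset.prod_pos fun i _ => by positivity

/-- Cauchy–Schwarz for infinite sums of reals. -/
lemma tsum_cs {ι : Type*} (f g : ι → ℝ) (hf : Summable fun i => f i ^ 2)
    (hg : Summable fun i => g i ^ 2) :
    |∑' i, f i * g i| ≤ Real.sqrt (∑' i, f i ^ 2) * Real.sqrt (∑' i, g i ^ 2) := by
  have habs : Summable fun i => |f i * g i| := by
    apply Summable.of_nonneg_of_le (fun i => abs_nonneg _) (fun i => ?_)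
      ((hf.add hg).div_const 2)
    rw [abs_mul]
    nlinarith [sq_nonneg (|f i| - |g i|), sq_abs (f i), sq_abs (g i)]
  have h0 : |∑' i, f i * g i| ≤ ∑' i, |f i * g i| := by
    have := norm_tsum_le_tsum_norm (f := fun i => f i * g i)
      (by simp only [Real.norm_eq_abs]; exact habs)
    simpa only [Real.norm_eq_abs] using this
  refine h0.trans ?_
  refine Summable.tsum_le_of_sum_le habs fun s => ?_
  have h1 : (∑ i ∈ s, |f i * g i|) ^ 2 ≤ (∑' i, f i ^ 2) * (∑' i, g i ^ 2) := by
    calc (∑ i ∈ s, |f i * g i|) ^ 2 = (∑ i ∈ s, |f i| * |g i|) ^ 2 := by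
          simp [abs_mul]
      _ ≤ (∑ i ∈ s, |f i| ^ 2) * (∑ i ∈ s, |g i| ^ 2) :=
          Finset.sum_mul_sq_le_sq_mul_sq s _ _
      _ ≤ (∑' i, f i ^ 2) * (∑' i, g i ^ 2) := by
          have hfs : ∑ i ∈ s, |f i| ^ 2 ≤ ∑' i, f i ^ 2 := by
            simpa [sq_abs] using Summable.sum_le_tsum s (fun i _ => sq_nonneg (f i)) hf
          have hgs : ∑ i ∈ s, |g i| ^ 2 ≤ ∑' i, g i ^ 2 := by
            simpa [sq_abs] using Summable.sum_le_tsum s (fun i _ => sq_nonneg (g i)) hg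
          have h1 : (0:ℝ) ≤ ∑ i ∈ s, |f i| ^ 2 := Finset.sum_nonneg fun i _ => sq_nonneg _
          have h2 : (0:ℝ) ≤ ∑' i, g i ^ 2 := tsum_nonneg fun i => sq_nonneg _
          have h3 : (0:ℝ) ≤ ∑ i ∈ s, |g i| ^ 2 := Finset.sum_nonneg fun i _ => sq_nonneg _
          nlinarith
  have h2 : ∑ i ∈ s, |f i * g i| ≤ Real.sqrt ((∑' i, f i ^ 2) * (∑' i, g i ^ 2)) := by
    rw [show ∑ i ∈ s, |f i * g i| = Real.sqrt ((∑ i ∈ s, |f i * g i|) ^ 2) from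
      (Real.sqrt_sq (Finset.sum_nonneg fun i _ => abs_nonneg _)).symm]
    exact Real.sqrt_le_sqrt h1
  rwa [Real.sqrt_mul (tsum_nonneg fun i => sq_nonneg _)] at h2

lemma nmul_pow_le {t : ℝ} (h0 : 0 ≤ t) (h1 : t < 1) (n : ℕ) :
    (n : ℝ) * t ^ (n - 1) ≤ ((1 - t)⁻¹) ^ 2 := by
  have hpos : 0 < 1 - t := by linarith
  have hinv : (1 : ℝ) ≤ ((1 - t)⁻¹) ^ 2 := by
    have h2 : 1 - t ≤ 1 := by linarith
    have h3 : (1:ℝ) ≤ (1 - t)⁻¹ := by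
      rw [le_inv_comm₀ one_pos hpos]; simpa using h2
    nlinarith
  match n with
  | 0 => simpa using by positivity
  | Nat.succ m =>
    rcases h0.eq_or_lt with ht | ht
    · rcases m with _ | m
      · simpa using hinv
      · simp [← ht]
    · have hs : HasSum (fun k : ℕ => (k : ℝ) * t ^ k) (t / (1 - t) ^ 2) :=
        hasSum_coe_mul_geometric_of_norm_lt_one
          (by rwa [Real.norm_eq_abs, abs_of_nonneg h0])
      have hle : ((m + 1 : ℕ) : ℝ) * t ^ (m + 1) ≤ t / (1 - t) ^ 2 :=
        le_hasSum hs (m + 1) fun k _ => by positivity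
      have hgoal : ((m + 1 : ℕ) : ℝ) * t ^ m * t ≤ ((1 - t)⁻¹) ^ 2 * t := by
        calc ((m + 1 : ℕ) : ℝ) * t ^ m * t = ((m + 1 : ℕ) : ℝ) * t ^ (m + 1) := by
              rw [pow_succ]; ring
          _ ≤ t / (1 - t) ^ 2 := hle
          _ = ((1 - t)⁻¹) ^ 2 * t := by field_simp
      have := (mul_le_mul_iff_of_pos_right ht).mp hgoal
      simpa using this

lemma sq_le_of_abs_le' {x b : ℝ} (h : |x| ≤ b) : x ^ 2 ≤ b ^ 2 := by
  nlinarith [abs_nonneg x, sq_abs x]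

variable {w : (Fin d → ℕ) → ℝ}

lemma innerH_comm (c c' : (Fin d → ℕ) → ℝ) : innerH w c c' = innerH w c' c :=
  tsum_congr fun α => by ring_nf

lemma innerSummable (hw : ∀ α, 0 ≤ w α) {c c' : (Fin d → ℕ) → ℝ}
    (hc : memH w c) (hc' : memH w c') :
    Summable fun α : Fin d → ℕ => mfact α ^ 2 * c α * c' α / w α := by
  apply Summable.of_abs
  apply Summable.of_nonneg_of_le (fun α => abs_nonneg _) (fun α => ?_)
    ((hc.2.add hc'.2).div_const 2)
  rcases (hw α).eq_or_lt with h | h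
  · rw [← h]
    simp
  · rw [abs_div, abs_of_pos h]
    have hre : (mfact α ^ 2 * c α ^ 2 / w α + mfact α ^ 2 * c' α ^ 2 / w α) / 2
        = ((mfact α ^ 2 * c α ^ 2 + mfact α ^ 2 * c' α ^ 2) / 2) / w α := by ring
    rw [hre]
    refine (div_le_div_iff_of_pos_right h).mpr ?_
    have h1 : |mfact α ^ 2 * c α * c' α| = mfact α ^ 2 * (|c α| * |c' α|) := by
      rw [abs_mul, abs_mul, abs_of_nonneg (sq_nonneg _), mul_assoc]
    rw [h1]
    nlinarith [sq_nonneg (|c α| - |c' α|), sq_abs (c α), sq_abs (c' α),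
      sq_nonneg (mfact α), mul_nonneg (abs_nonneg (c α)) (abs_nonneg (c' α))]

lemma innerH_split_left (u x y z : (Fin d → ℕ) → ℝ)
    (hxy : ∀ α, x α = y α + z α)
    (h1 : Summable fun α : Fin d → ℕ => mfact α ^ 2 * y α * u α / w α)
    (h2 : Summable fun α : Fin d → ℕ => mfact α ^ 2 * z α * u α / w α) :
    innerH w x u = innerH w y u + innerH w z u := by
  unfold innerH
  rw [← Summable.tsum_add h1 h2]
  exact tsum_congr fun α => by rw [hxy α]; ring

lemma innerH_split_right (u x y z : (Fin d → ℕ) → ℝ)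
    (hxy : ∀ α, x α = y α + z α)
    (h1 : Summable fun α : Fin d → ℕ => mfact α ^ 2 * u α * y α / w α)
    (h2 : Summable fun α : Fin d → ℕ => mfact α ^ 2 * u α * z α / w α) :
    innerH w u x = innerH w u y + innerH w u z := by
  unfold innerH
  rw [← Summable.tsum_add h1 h2]
  exact tsum_congr fun α => by rw [hxy α]; ring

lemma memH_mulfactor (hw : ∀ α, 0 ≤ w α) {c : (Fin d → ℕ) → ℝ} (hc : memH w c)
    (φ : (Fin d → ℕ) → ℝ) (B : ℝ) (hB : ∀ α, |φ α| ≤ B) :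
    memH w (fun α => φ α * c α) := by
  constructor
  · intro α h
    show φ α * c α = 0
    rw [hc.1 α h, mul_zero]
  · apply Summable.of_nonneg_of_le (fun α => div_nonneg (by positivity) (hw α))
      (fun α => ?_) (hc.2.mul_left (B ^ 2))
    have h1 : mfact α ^ 2 * (φ α * c α) ^ 2 / w α
        = (mfact α ^ 2 * c α ^ 2 / w α) * φ α ^ 2 := by ring
    have h2 : B ^ 2 * (mfact α ^ 2 * c α ^ 2 / w α)
        = (mfact α ^ 2 * c α ^ 2 / w α) * B ^ 2 := by ring
    rw [h1, h2]
    exact mul_le_mul_of_nonneg_left (sq_le_of_abs_le' (hB α))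
      (div_nonneg (by positivity) (hw α))

lemma memH_sub (hw : ∀ α, 0 ≤ w α) {c c' : (Fin d → ℕ) → ℝ}
    (hc : memH w c) (hc' : memH w c') : memH w (c - c') := by
  constructor
  · intro α h
    show c α - c' α = 0
    rw [hc.1 α h, hc'.1 α h, sub_zero]
  · apply Summable.of_nonneg_of_le (fun α => div_nonneg (by positivity) (hw α))
      (fun α => ?_) ((hc.2.mul_left 2).add (hc'.2.mul_left 2))
    rcases (hw α).eq_or_lt with h | h
    · rw [← h]
      simp
    · have hcc : (c - c') α = c α - c' α := rfl
      have hnum : mfact α ^ 2 * ((c - c') α) ^ 2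
          ≤ 2 * (mfact α ^ 2 * c α ^ 2) + 2 * (mfact α ^ 2 * c' α ^ 2) := by
        rw [hcc]
        nlinarith [sq_nonneg (c α + c' α), sq_nonneg (mfact α), mfact_pos α]
      calc mfact α ^ 2 * ((c - c') α) ^ 2 / w α
          ≤ (2 * (mfact α ^ 2 * c α ^ 2) + 2 * (mfact α ^ 2 * c' α ^ 2)) / w α := by
            exact (div_le_div_iff_of_pos_right h).mpr hnum
        _ = 2 * (mfact α ^ 2 * c α ^ 2 / w α) + 2 * (mfact α ^ 2 * c' α ^ 2 / w α) := by
            ring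

lemma inner_eval_bound (hw : ∀ α, 0 ≤ w α) {c : (Fin d → ℕ) → ℝ} (hc : memH w c)
    (P : (Fin d → ℕ) → ℝ)
    (hP : Summable fun α : Fin d → ℕ => w α * P α ^ 2 / mfact α ^ 2)
    {κ : ℝ} (hκ : 0 ≤ κ)
    (hPκ : ∑' α : Fin d → ℕ, w α * P α ^ 2 / mfact α ^ 2 ≤ κ ^ 2) :
    |∑' α : Fin d → ℕ, c α * P α| ≤ normH w c * κ := by
  set f : (Fin d → ℕ) → ℝ := fun α => mfact α * c α / Real.sqrt (w α) with hf
  set g : (Fin d → ℕ) → ℝ := fun α => Real.sqrt (w α) * P α / mfact α with hg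
  have hf2 : ∀ α, f α ^ 2 = mfact α ^ 2 * c α ^ 2 / w α := fun α => by
    rw [hf]
    simp only
    rw [div_pow, mul_pow, Real.sq_sqrt (hw α)]
  have hg2 : ∀ α, g α ^ 2 = w α * P α ^ 2 / mfact α ^ 2 := fun α => by
    rw [hg]
    simp only
    rw [div_pow, mul_pow, Real.sq_sqrt (hw α)]
  have hfg : ∀ α, c α * P α = f α * g α := fun α => by
    rcases (hw α).eq_or_lt with h | h
    · simp [hf, hg, ← h, hc.1 α h.symm]
    · have hm : mfact α ≠ 0 := (mfact_pos α).ne'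
      have hs : Real.sqrt (w α) ≠ 0 := by positivity
      rw [hf, hg]
      simp only
      field_simp
  rw [tsum_congr hfg]
  have hfs : Summable fun α => f α ^ 2 := hc.2.congr fun α => (hf2 α).symm
  have hgs : Summable fun α => g α ^ 2 := hP.congr fun α => (hg2 α).symm
  refine (tsum_cs f g hfs hgs).trans ?_
  have e1 : Real.sqrt (∑' α, f α ^ 2) = normH w c := by
    unfold normH innerH
    congr 1
    exact tsum_congr fun α => by rw [hf2 α]; ring
  have e2 : Real.sqrt (∑' α, g α ^ 2) ≤ κ := by
    calc Real.sqrt (∑' α, g α ^ 2)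
        = Real.sqrt (∑' α, w α * P α ^ 2 / mfact α ^ 2) := by rw [tsum_congr hg2]
      _ ≤ Real.sqrt (κ ^ 2) := Real.sqrt_le_sqrt hPκ
      _ = κ := Real.sqrt_sq hκ
  rw [e1]
  exact mul_le_mul_of_nonneg_left e2 (Real.sqrt_nonneg _) |>.trans (le_refl _)

lemma prod_pow_abs_le_one {ξ : Fin d → ℝ} (h1 : ∀ j, |ξ j| ≤ 1) (α : Fin d → ℕ) :
    |∏ j, ξ j ^ α j| ≤ 1 := by
  rw [Finset.abs_prod]
  refine Finset.prod_le_one (fun j _ => abs_nonneg _) fun j _ => ?_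
  rw [abs_pow]
  exact pow_le_one₀ (abs_nonneg _) (h1 j)

lemma dfactor_abs_le {i : Fin d} {t : Fin d → ℝ} (h1 : ∀ j, |t j| ≤ 1)
    (hi : |t i| < 1) (α : Fin d → ℕ) :
    |(α i : ℝ) * (t i ^ (α i - 1) * ∏ j ∈ Finset.univ.erase i, t j ^ α j)|
      ≤ ((1 - |t i|)⁻¹) ^ 2 := by
  rw [abs_mul, abs_mul, abs_pow, Nat.abs_cast, Finset.abs_prod]
  have hprod : ∏ j ∈ Finset.univ.erase i, |t j ^ α j| ≤ 1 := by
    refine Finset.prod_le_one (fun j _ => abs_nonneg _) fun j _ => ?_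
    rw [abs_pow]
    exact pow_le_one₀ (abs_nonneg _) (h1 j)
  have hnm := nmul_pow_le (abs_nonneg (t i)) hi (α i)
  calc (α i : ℝ) * (|t i| ^ (α i - 1) * ∏ j ∈ Finset.univ.erase i, |t j ^ α j|)
      = ((α i : ℝ) * |t i| ^ (α i - 1)) * ∏ j ∈ Finset.univ.erase i, |t j ^ α j| := by
        ring
    _ ≤ ((1 - |t i|)⁻¹) ^ 2 * 1 := by
        refine mul_le_mul hnm hprod (Finset.prod_nonneg fun j _ => abs_nonneg _) ?_
        positivity
    _ = ((1 - |t i|)⁻¹) ^ 2 := mul_one _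

lemma prod_mul_pow (ξ z : Fin d → ℝ) (α : Fin d → ℕ) :
    ∏ j, (ξ j * z j) ^ α j = (∏ j, ξ j ^ α j) * ∏ j, z j ^ α j := by
  rw [← Finset.prod_mul_distrib]
  exact Finset.prod_congr rfl fun j _ => mul_pow _ _ _

lemma dterm_eq (i : Fin d) (ξ z : Fin d → ℝ) (α : Fin d → ℕ) :
    (α i : ℝ) * ξ i ^ (α i - 1) * (∏ j ∈ Finset.univ.erase i, ξ j ^ α j) * ∏ j, z j ^ α j
    = z i * ((α i : ℝ) * ((ξ i * z i) ^ (α i - 1) *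
        ∏ j ∈ Finset.univ.erase i, (ξ j * z j) ^ α j)) := by
  have hz : ∏ j, z j ^ α j = z i ^ α i * ∏ j ∈ Finset.univ.erase i, z j ^ α j :=
    (Finset.mul_prod_erase _ _ (Finset.mem_univ i)).symm
  have hprod : ∏ j ∈ Finset.univ.erase i, (ξ j * z j) ^ α j
      = (∏ j ∈ Finset.univ.erase i, ξ j ^ α j) * ∏ j ∈ Finset.univ.erase i, z j ^ α j := by
    rw [← Finset.prod_mul_distrib]
    exact Finset.prod_congr rfl fun j _ => mul_pow _ _ _
  rcases h : α i with _ | m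
  · simp [h]
  · rw [hz, hprod, h]
    simp only [Nat.succ_sub_one]
    rw [mul_pow, pow_succ]
    push_cast
    ring

end Lemma4Aux

/-- Deterministic core of Lemma 4(i): uniform bound on the difference of the
ξ_i-derivatives of the empirical quadratic loss at two elements of the native space,
in terms of the RKHS distance between them. -/
theorem lemma4i_deterministic_core
    (d : ℕ) (hd : 1 ≤ d)
    (w : (Fin d → ℕ) → ℝ) (hw : ∀ α, 0 ≤ w α)
    (hwsum : Summable fun α : Fin d → ℕ => w α / mfact α ^ 2)
    (Z : Set (Fin d → ℝ)) (hZne : Z.Nonempty)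
    (hZsub : ∀ z ∈ Z, ∀ j, z j ∈ Set.Ioo (-1:ℝ) 1)
    (hZcontr : ∀ z ∈ Z, ∀ ξ : Fin d → ℝ, (∀ j, ξ j ∈ Set.Icc (0:ℝ) 1) →
      (fun j => ξ j * z j) ∈ Z)
    (κ : ℝ) (hκ : 0 < κ)
    (hκ0 : ∀ z ∈ Z, ∑' α : Fin d → ℕ, w α * (∏ j, z j ^ α j) ^ 2 / mfact α ^ 2 ≤ κ ^ 2)
    (hκ1 : ∀ z ∈ Z, ∀ i : Fin d, ∑' α : Fin d → ℕ,
      w α * ((α i : ℝ) * (z i ^ (α i - 1) * ∏ j ∈ Finset.univ.erase i, z j ^ α j)) ^ 2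
        / mfact α ^ 2 ≤ κ ^ 2)
    (Chat : ((Fin d → ℕ) → ℝ) → ((Fin d → ℕ) → ℝ))
    (hChatH : ∀ c, memH w c → memH w (Chat c))
    (hChatLin : ∀ (a : ℝ) (c c' : (Fin d → ℕ) → ℝ), memH w c → memH w c' →
      Chat (a • c + c') = a • Chat c + Chat c')
    (ghat : (Fin d → ℕ) → ℝ) (hghat : memH w ghat)
    (β : ℝ) (hβ : 0 < β)
    (hCbound : ∀ c c' : (Fin d → ℕ) → ℝ, memH w c → memH w c' →
      |innerH w c (Chat c')| ≤ β * supNormOn Z c * supNormOn Z c')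
    (hgbound : ∀ c : (Fin d → ℕ) → ℝ, memH w c →
      |innerH w c ghat| ≤ β * supNormOn Z c) :
    ∀ fhat fstar : (Fin d → ℕ) → ℝ, memH w fhat → memH w fstar → ∀ i : Fin d,
      ∀ ξ : Fin d → ℝ, (∀ j, ξ j ∈ Set.Ioo (0:ℝ) 1) →
        |quadLossDeriv w Chat ghat i ξ fhat - quadLossDeriv w Chat ghat i ξ fstar| ≤
          (κ ^ 2 * β * (normH w fhat + normH w fstar) + κ * β) * normH w (fhat - fstar) := by
  intro fhat fstar hfhat hfstar i ξ hξ
  haveI : Nonempty Z := hZne.to_subtype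
  set e : (Fin d → ℕ) → ℝ := fhat - fstar with he
  have hξ0 : ∀ j, 0 ≤ ξ j := fun j => (hξ j).1.le
  have hξ1 : ∀ j, ξ j ≤ 1 := fun j => (hξ j).2.le
  have hξ01 : ∀ j, ξ j ∈ Set.Icc (0:ℝ) 1 := fun j => ⟨hξ0 j, hξ1 j⟩
  have hme : memH w e := memH_sub hw hfhat hfstar
  have hξabs : ∀ j, |ξ j| ≤ 1 := fun j => by
    rw [abs_of_nonneg (hξ0 j)]; exact hξ1 j
  have hSmem : ∀ c : (Fin d → ℕ) → ℝ, memH w c → memH w (Sscale ξ c) := fun c hc =>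
    memH_mulfactor hw hc (fun α => ∏ j, ξ j ^ α j) 1
      (fun α => prod_pow_abs_le_one hξabs α)
  have hDmem : ∀ c : (Fin d → ℕ) → ℝ, memH w c → memH w (Dscale i ξ c) := by
    intro c hc
    refine memH_mulfactor hw hc
      (fun α => (α i : ℝ) * ξ i ^ (α i - 1) * ∏ j ∈ Finset.univ.erase i, ξ j ^ α j)
      (((1 - |ξ i|)⁻¹) ^ 2) (fun α => ?_)
    show |(α i : ℝ) * ξ i ^ (α i - 1) * ∏ j ∈ Finset.univ.erase i, ξ j ^ α j|
      ≤ ((1 - |ξ i|)⁻¹) ^ 2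
    rw [mul_assoc]
    exact dfactor_abs_le hξabs (by rw [abs_of_nonneg (hξ0 i)]; exact (hξ i).2) α
  -- sup-norm bounds
  have hsupS : ∀ c : (Fin d → ℕ) → ℝ, memH w c →
      supNormOn Z (Sscale ξ c) ≤ κ * normH w c := by
    intro c hc
    refine ciSup_le ?_
    rintro ⟨z, hz⟩
    have hz' : (fun j => ξ j * z j) ∈ Z := hZcontr z hz ξ hξ01
    have habs1 : ∀ j, |ξ j * z j| ≤ 1 := fun j =>
      (abs_lt.mpr ⟨(hZsub _ hz' j).1, (hZsub _ hz' j).2⟩).le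
    have hterm : ∀ α : Fin d → ℕ, Sscale ξ c α * ∏ j, z j ^ α j
        = c α * ∏ j, (ξ j * z j) ^ α j := fun α => by
      simp only [Sscale]
      rw [prod_mul_pow]
      ring
    have heval : evalF (Sscale ξ c) z = ∑' α : Fin d → ℕ, c α * ∏ j, (ξ j * z j) ^ α j := by
      unfold evalF
      exact tsum_congr hterm
    have hP : Summable fun α : Fin d → ℕ =>
        w α * (∏ j, (ξ j * z j) ^ α j) ^ 2 / mfact α ^ 2 := by
      apply Summable.of_nonneg_of_le
        (fun α => div_nonneg (mul_nonneg (hw α) (sq_nonneg _)) (sq_nonneg _))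
        (fun α => ?_) hwsum
      have h1 : (∏ j, (ξ j * z j) ^ α j) ^ 2 ≤ 1 := by
        have := sq_le_of_abs_le' (prod_pow_abs_le_one habs1 α)
        simpa using this
      calc w α * (∏ j, (ξ j * z j) ^ α j) ^ 2 / mfact α ^ 2
          ≤ w α * 1 / mfact α ^ 2 := by
            refine (div_le_div_iff_of_pos_right (pow_pos (mfact_pos α) 2)).mpr ?_
            exact mul_le_mul_of_nonneg_left h1 (hw α)
        _ = w α / mfact α ^ 2 := by rw [mul_one]
    have hb := inner_eval_bound hw hc _ hP hκ.le (hκ0 _ hz')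
    rw [heval]
    calc |∑' α : Fin d → ℕ, c α * ∏ j, (ξ j * z j) ^ α j| ≤ normH w c * κ := hb
      _ = κ * normH w c := mul_comm _ _
  have hsupD : ∀ c : (Fin d → ℕ) → ℝ, memH w c →
      supNormOn Z (Dscale i ξ c) ≤ κ * normH w c := by
    intro c hc
    refine ciSup_le ?_
    rintro ⟨z, hz⟩
    have hz' : (fun j => ξ j * z j) ∈ Z := hZcontr z hz ξ hξ01
    have habs1 : ∀ j, |ξ j * z j| ≤ 1 := fun j =>
      (abs_lt.mpr ⟨(hZsub _ hz' j).1, (hZsub _ hz' j).2⟩).le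
    have habsi : |ξ i * z i| < 1 := abs_lt.mpr ⟨(hZsub _ hz' i).1, (hZsub _ hz' i).2⟩
    have hterm : ∀ α : Fin d → ℕ, Dscale i ξ c α * ∏ j, z j ^ α j
        = z i * (c α * ((α i : ℝ) * ((ξ i * z i) ^ (α i - 1) *
            ∏ j ∈ Finset.univ.erase i, (ξ j * z j) ^ α j))) := fun α => by
      simp only [Dscale]
      have h := dterm_eq i ξ z α
      linear_combination (c α) * h
    have heval : evalF (Dscale i ξ c) z
        = z i * ∑' α : Fin d → ℕ, c α * ((α i : ℝ) * ((ξ i * z i) ^ (α i - 1) *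
            ∏ j ∈ Finset.univ.erase i, (ξ j * z j) ^ α j)) := by
      unfold evalF
      rw [← tsum_mul_left]
      exact tsum_congr hterm
    have hP : Summable fun α : Fin d → ℕ => w α * ((α i : ℝ) * ((ξ i * z i) ^ (α i - 1) *
        ∏ j ∈ Finset.univ.erase i, (ξ j * z j) ^ α j)) ^ 2 / mfact α ^ 2 := by
      apply Summable.of_nonneg_of_le
        (fun α => div_nonneg (mul_nonneg (hw α) (sq_nonneg _)) (sq_nonneg _))
        (fun α => ?_) (hwsum.mul_left ((((1 - |ξ i * z i|)⁻¹) ^ 2) ^ 2))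
      have h1 : ((α i : ℝ) * ((ξ i * z i) ^ (α i - 1) *
          ∏ j ∈ Finset.univ.erase i, (ξ j * z j) ^ α j)) ^ 2
          ≤ (((1 - |ξ i * z i|)⁻¹) ^ 2) ^ 2 :=
        sq_le_of_abs_le' (dfactor_abs_le (t := fun j => ξ j * z j) habs1 habsi α)
      calc w α * ((α i : ℝ) * ((ξ i * z i) ^ (α i - 1) *
            ∏ j ∈ Finset.univ.erase i, (ξ j * z j) ^ α j)) ^ 2 / mfact α ^ 2
          = (w α / mfact α ^ 2) * ((α i : ℝ) * ((ξ i * z i) ^ (α i - 1) *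
            ∏ j ∈ Finset.univ.erase i, (ξ j * z j) ^ α j)) ^ 2 := by ring
        _ ≤ (w α / mfact α ^ 2) * (((1 - |ξ i * z i|)⁻¹) ^ 2) ^ 2 :=
            mul_le_mul_of_nonneg_left h1 (div_nonneg (hw α) (sq_nonneg _))
        _ = (((1 - |ξ i * z i|)⁻¹) ^ 2) ^ 2 * (w α / mfact α ^ 2) := mul_comm _ _
    have hb := inner_eval_bound hw hc _ hP hκ.le (hκ1 _ hz' i)
    have hzi : |z i| ≤ 1 := (abs_lt.mpr ⟨(hZsub z hz i).1, (hZsub z hz i).2⟩).le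
    rw [heval, abs_mul]
    have hmm := mul_le_mul hzi hb (abs_nonneg _) one_pos.le
    nlinarith [hmm]
  have hsup0 : ∀ c : (Fin d → ℕ) → ℝ, 0 ≤ supNormOn Z c := fun c =>
    Real.iSup_nonneg fun z => abs_nonneg _
  have hN0 : ∀ c : (Fin d → ℕ) → ℝ, 0 ≤ normH w c := fun c => Real.sqrt_nonneg _
  -- membership of all relevant elements
  have hSu := hSmem fhat hfhat
  have hSv := hSmem fstar hfstar
  have hSe := hSmem e hme
  have hDu := hDmem fhat hfhat
  have hDv := hDmem fstar hfstar
  have hDe := hDmem e hme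
  have hCSu := hChatH _ hSu
  have hCSv := hChatH _ hSv
  have hCSe := hChatH _ hSe
  have hCDu := hChatH _ hDu
  have hCDv := hChatH _ hDv
  have hCDe := hChatH _ hDe
  -- pointwise decompositions
  have hSpt : ∀ α, Sscale ξ fhat α = Sscale ξ fstar α + Sscale ξ e α := fun α => by
    simp only [Sscale, he, Pi.sub_apply]
    ring
  have hDpt : ∀ α, Dscale i ξ fhat α = Dscale i ξ fstar α + Dscale i ξ e α := fun α => by
    simp only [Dscale, he, Pi.sub_apply]
    ring
  have hCSsplit : ∀ α, Chat (Sscale ξ fhat) α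
      = Chat (Sscale ξ fstar) α + Chat (Sscale ξ e) α := by
    have h1 : Sscale ξ fhat = (1:ℝ) • Sscale ξ fstar + Sscale ξ e := by
      funext α
      simp only [Pi.add_apply, Pi.smul_apply, one_smul]
      exact hSpt α
    intro α
    rw [h1, hChatLin 1 _ _ hSv hSe]
    simp
  have hCDsplit : ∀ α, Chat (Dscale i ξ fhat) α
      = Chat (Dscale i ξ fstar) α + Chat (Dscale i ξ e) α := by
    have h1 : Dscale i ξ fhat = (1:ℝ) • Dscale i ξ fstar + Dscale i ξ e := by
      funext α
      simp only [Pi.add_apply, Pi.smul_apply, one_smul]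
      exact hDpt α
    intro α
    rw [h1, hChatLin 1 _ _ hDv hDe]
    simp
  -- inner product decompositions
  have I1 : innerH w (Dscale i ξ fhat) (Chat (Sscale ξ fhat))
      = innerH w (Dscale i ξ fstar) (Chat (Sscale ξ fhat))
        + innerH w (Dscale i ξ e) (Chat (Sscale ξ fhat)) :=
    innerH_split_left _ _ _ _ hDpt (innerSummable hw hDv hCSu) (innerSummable hw hDe hCSu)
  have I2 : innerH w (Dscale i ξ fstar) (Chat (Sscale ξ fhat))
      = innerH w (Dscale i ξ fstar) (Chat (Sscale ξ fstar))
        + innerH w (Dscale i ξ fstar) (Chat (Sscale ξ e)) :=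
    innerH_split_right _ _ _ _ hCSsplit (innerSummable hw hDv hCSv) (innerSummable hw hDv hCSe)
  have I3 : innerH w (Sscale ξ fhat) (Chat (Dscale i ξ fhat))
      = innerH w (Sscale ξ fstar) (Chat (Dscale i ξ fhat))
        + innerH w (Sscale ξ e) (Chat (Dscale i ξ fhat)) :=
    innerH_split_left _ _ _ _ hSpt (innerSummable hw hSv hCDu) (innerSummable hw hSe hCDu)
  have I4 : innerH w (Sscale ξ fstar) (Chat (Dscale i ξ fhat))
      = innerH w (Sscale ξ fstar) (Chat (Dscale i ξ fstar))
        + innerH w (Sscale ξ fstar) (Chat (Dscale i ξ e)) :=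
    innerH_split_right _ _ _ _ hCDsplit (innerSummable hw hSv hCDv) (innerSummable hw hSv hCDe)
  have I5 : innerH w ghat (Dscale i ξ fhat)
      = innerH w ghat (Dscale i ξ fstar) + innerH w ghat (Dscale i ξ e) :=
    innerH_split_right _ _ _ _ hDpt (innerSummable hw hghat hDv) (innerSummable hw hghat hDe)
  have key : quadLossDeriv w Chat ghat i ξ fhat - quadLossDeriv w Chat ghat i ξ fstar
      = (1/2) * innerH w (Dscale i ξ fstar) (Chat (Sscale ξ e))
      + (1/2) * innerH w (Dscale i ξ e) (Chat (Sscale ξ fhat))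
      + (1/2) * innerH w (Sscale ξ fstar) (Chat (Dscale i ξ e))
      + (1/2) * innerH w (Sscale ξ e) (Chat (Dscale i ξ fhat))
      - innerH w ghat (Dscale i ξ e) := by
    unfold quadLossDeriv
    rw [I1, I2, I3, I4, I5]
    ring
  -- bounds on the five terms
  have bound2 : ∀ x y : (Fin d → ℕ) → ℝ, ∀ Nx Ny : ℝ, 0 ≤ Nx →
      supNormOn Z x ≤ κ * Nx → supNormOn Z y ≤ κ * Ny → memH w x → memH w y →
      |innerH w x (Chat y)| ≤ β * (κ * Nx) * (κ * Ny) := by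
    intro x y Nx Ny hNx hx hy hmx hmy
    refine (hCbound _ _ hmx hmy).trans ?_
    calc β * supNormOn Z x * supNormOn Z y
        ≤ β * (κ * Nx) * supNormOn Z y :=
          mul_le_mul_of_nonneg_right (mul_le_mul_of_nonneg_left hx hβ.le) (hsup0 y)
      _ ≤ β * (κ * Nx) * (κ * Ny) :=
          mul_le_mul_of_nonneg_left hy (mul_nonneg hβ.le (mul_nonneg hκ.le hNx))
  have B1 : |innerH w (Dscale i ξ fstar) (Chat (Sscale ξ e))|
      ≤ β * (κ * normH w fstar) * (κ * normH w e) :=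
    bound2 _ _ _ _ (hN0 fstar) (hsupD fstar hfstar) (hsupS e hme) hDv hSe
  have B2 : |innerH w (Dscale i ξ e) (Chat (Sscale ξ fhat))|
      ≤ β * (κ * normH w e) * (κ * normH w fhat) :=
    bound2 _ _ _ _ (hN0 e) (hsupD e hme) (hsupS fhat hfhat) hDe hSu
  have B3 : |innerH w (Sscale ξ fstar) (Chat (Dscale i ξ e))|
      ≤ β * (κ * normH w fstar) * (κ * normH w e) :=
    bound2 _ _ _ _ (hN0 fstar) (hsupS fstar hfstar) (hsupD e hme) hSv hDe
  have B4 : |innerH w (Sscale ξ e) (Chat (Dscale i ξ fhat))|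
      ≤ β * (κ * normH w e) * (κ * normH w fhat) :=
    bound2 _ _ _ _ (hN0 e) (hsupS e hme) (hsupD fhat hfhat) hSe hDu
  have B5 : |innerH w ghat (Dscale i ξ e)| ≤ β * (κ * normH w e) := by
    rw [innerH_comm]
    refine (hgbound _ hDe).trans ?_
    exact mul_le_mul_of_nonneg_left (hsupD e hme) hβ.le
  have habs5 : ∀ t1 t2 t3 t4 t5 : ℝ,
      |(1/2)*t1 + (1/2)*t2 + (1/2)*t3 + (1/2)*t4 - t5|
        ≤ (1/2)*|t1| + (1/2)*|t2| + (1/2)*|t3| + (1/2)*|t4| + |t5| := by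
    intro t1 t2 t3 t4 t5
    have h := abs_sub ((1/2)*t1 + (1/2)*t2 + (1/2)*t3 + (1/2)*t4) t5
    have h1 := abs_add_le ((1/2)*t1 + (1/2)*t2 + (1/2)*t3) ((1/2)*t4)
    have h2 := abs_add_le ((1/2)*t1 + (1/2)*t2) ((1/2)*t3)
    have h3 := abs_add_le ((1/2)*t1) ((1/2)*t2)
    have e1 : |(1/2)*t1| = (1/2)*|t1| := by rw [abs_mul]; norm_num
    have e2 : |(1/2)*t2| = (1/2)*|t2| := by rw [abs_mul]; norm_num
    have e3 : |(1/2)*t3| = (1/2)*|t3| := by rw [abs_mul]; norm_num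
    have e4 : |(1/2)*t4| = (1/2)*|t4| := by rw [abs_mul]; norm_num
    linarith
  rw [key]
  refine (habs5 _ _ _ _ _).trans ?_
  have heq : (κ ^ 2 * β * (normH w fhat + normH w fstar) + κ * β) * normH w e
      = (1/2)*(β * (κ * normH w fstar) * (κ * normH w e))
      + (1/2)*(β * (κ * normH w e) * (κ * normH w fhat))
      + (1/2)*(β * (κ * normH w fstar) * (κ * normH w e))
      + (1/2)*(β * (κ * normH w e) * (κ * normH w fhat))
      + β * (κ * normH w e) := by ring
  linarith [B1, B2, B3, B4, B5]
end
end

section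
/- Lemma B.1 (convergence of scaling derivatives under convergence of the estimator). Let f* ∈ H and, on a probability space, let f̂_n be random elements of H with ‖f̂_n − f*‖ → 0 in probability. Then for every ξ ∈ (0,1)^d and every i ∈ Fin d, ‖D_i(ξ) f̂_n − D_i(ξ) f*‖ → 0 in probability. -/
open MeasureTheory Filter Topology

noncomputable section

private lemma aux_geom_bound (t : ℝ) (ht0 : 0 < t) (ht1 : t < 1) (n : ℕ) :
    (n : ℝ) * t ^ (n - 1) ≤ (1 - t)⁻¹ := by
  have h1t : 0 < 1 - t := by linarith
  have h1 : (n : ℝ) * t ^ (n - 1) ≤ ∑ k ∈ Finset.range n, t ^ k := by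
    have h2 : ∀ k ∈ Finset.range n, t ^ (n - 1) ≤ t ^ k := fun k hk =>
      pow_le_pow_of_le_one ht0.le ht1.le (by have := Finset.mem_range.mp hk; omega)
    calc (n : ℝ) * t ^ (n - 1) = (Finset.range n).card • t ^ (n - 1) := by
          simp [nsmul_eq_mul]
      _ ≤ ∑ k ∈ Finset.range n, t ^ k := Finset.card_nsmul_le_sum _ _ _ h2
  refine h1.trans ?_
  rw [geom_sum_eq (by linarith : t ≠ 1)]
  have heq : (t ^ n - 1) / (t - 1) = (1 - t ^ n) / (1 - t) := by
    rw [← neg_div_neg_eq]; ring_nf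
  rw [heq, ← one_div]
  apply div_le_div_of_nonneg_right ?_ h1t.le |>.trans_eq rfl
  · nlinarith [pow_nonneg ht0.le n]

private lemma summable_sub_aux {d : ℕ} (w : (Fin d → ℕ) → ℝ) (hw : ∀ α, 0 ≤ w α)
    (a b : (Fin d → ℕ) → ℝ) (ha : memH w a) (hb : memH w b) :
    Summable (fun α : Fin d → ℕ => mfact α ^ 2 * (a α - b α) ^ 2 / w α) := by
  refine Summable.of_nonneg_of_le
    (fun α => div_nonneg (mul_nonneg (sq_nonneg _) (sq_nonneg _)) (hw α))
    (fun α => ?_) (((ha.2.mul_left 2).add (hb.2.mul_left 2)))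
  rcases eq_or_lt_of_le (hw α) with h | h
  · simp [← h]
  · have hnum : mfact α ^ 2 * (a α - b α) ^ 2 ≤
        2 * (mfact α ^ 2 * a α ^ 2) + 2 * (mfact α ^ 2 * b α ^ 2) := by
      nlinarith [sq_nonneg (mfact α), sq_nonneg (a α + b α)]
    have : 2 * (mfact α ^ 2 * a α ^ 2 / w α) + 2 * (mfact α ^ 2 * b α ^ 2 / w α)
        = (2 * (mfact α ^ 2 * a α ^ 2) + 2 * (mfact α ^ 2 * b α ^ 2)) / w α := by ring
    rw [this]
    exact div_le_div_of_nonneg_right hnum h.le |>.trans_eq rfl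

private lemma normH_Dscale_le {d : ℕ} (w : (Fin d → ℕ) → ℝ) (hw : ∀ α, 0 ≤ w α)
    (ξ : Fin d → ℝ) (hξ : ∀ j, ξ j ∈ Set.Ioo (0:ℝ) 1) (i : Fin d)
    (c : (Fin d → ℕ) → ℝ)
    (hc : Summable (fun α : Fin d → ℕ => mfact α ^ 2 * c α ^ 2 / w α)) :
    normH w (Dscale i ξ c) ≤ (1 - ξ i)⁻¹ * normH w c := by
  obtain ⟨hξ0, hξ1⟩ := hξ i
  have hM : (0:ℝ) < (1 - ξ i)⁻¹ := inv_pos.mpr (by linarith)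
  set M : ℝ := (1 - ξ i)⁻¹ with hMdef
  set m : (Fin d → ℕ) → ℝ :=
    fun α => (α i : ℝ) * ξ i ^ (α i - 1) * ∏ j ∈ Finset.univ.erase i, ξ j ^ α j with hmdef
  have hm0 : ∀ α, 0 ≤ m α := by
    intro α
    refine mul_nonneg (mul_nonneg (by positivity) (by positivity)) ?_
    exact Finset.prod_nonneg fun j _ => pow_nonneg (hξ j).1.le _
  have hmM : ∀ α, m α ≤ M := by
    intro α
    have h1 : (α i : ℝ) * ξ i ^ (α i - 1) ≤ M := aux_geom_bound _ hξ0 hξ1 _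
    have h2 : ∏ j ∈ Finset.univ.erase i, ξ j ^ α j ≤ 1 :=
      Finset.prod_le_one (fun j _ => pow_nonneg (hξ j).1.le _)
        (fun j _ => pow_le_one₀ (hξ j).1.le (hξ j).2.le)
    calc m α ≤ ((α i : ℝ) * ξ i ^ (α i - 1)) * 1 := by
          exact mul_le_mul_of_nonneg_left h2 (by positivity)
      _ ≤ M := by rw [mul_one]; exact h1
  set g : (Fin d → ℕ) → ℝ := fun α => mfact α ^ 2 * c α * c α / w α with hgdef
  have hg0 : ∀ α, 0 ≤ g α := by
    intro α
    apply div_nonneg _ (hw α)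
    have : mfact α ^ 2 * c α * c α = mfact α ^ 2 * c α ^ 2 := by ring
    rw [this]; positivity
  have hgsum : Summable g := by
    have : g = fun α => mfact α ^ 2 * c α ^ 2 / w α := by funext α; simp [hgdef]; ring
    rw [this]; exact hc
  have hDterm : (fun α : Fin d → ℕ =>
      mfact α ^ 2 * Dscale i ξ c α * Dscale i ξ c α / w α) = fun α => m α ^ 2 * g α := by
    funext α
    simp only [Dscale, hgdef, hmdef, div_eq_mul_inv]
    ring
  have hinnerD : innerH w (Dscale i ξ c) (Dscale i ξ c) = ∑' α, m α ^ 2 * g α := by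
    unfold innerH; rw [hDterm]
  have hsumM : Summable (fun α => M ^ 2 * g α) := hgsum.mul_left _
  have hsumD : Summable (fun α => m α ^ 2 * g α) :=
    Summable.of_nonneg_of_le (fun α => mul_nonneg (sq_nonneg _) (hg0 α))
      (fun α => mul_le_mul_of_nonneg_right
        (by nlinarith [hm0 α, hmM α]) (hg0 α)) hsumM
  have hle : innerH w (Dscale i ξ c) (Dscale i ξ c) ≤ M ^ 2 * innerH w c c := by
    rw [hinnerD]
    have : M ^ 2 * innerH w c c = ∑' α, M ^ 2 * g α := by
      unfold innerH; rw [← tsum_mul_left]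
    rw [this]
    exact Summable.tsum_le_tsum (fun α => mul_le_mul_of_nonneg_right
      (by nlinarith [hm0 α, hmM α]) (hg0 α)) hsumD hsumM
  have hcc : 0 ≤ innerH w c c := tsum_nonneg (fun α => hg0 α)
  unfold normH
  calc Real.sqrt (innerH w (Dscale i ξ c) (Dscale i ξ c))
      ≤ Real.sqrt (M ^ 2 * innerH w c c) := Real.sqrt_le_sqrt hle
    _ = M * Real.sqrt (innerH w c c) := by
        rw [Real.sqrt_mul (sq_nonneg M), Real.sqrt_sq hM.le]

/-- Lemma B.1: if `‖f̂_n − f*‖ → 0` in probability, then for every `ξ ∈ (0,1)^d` and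
every coordinate `i`, `‖D_i(ξ) f̂_n − D_i(ξ) f*‖ → 0` in probability. -/
theorem scaling_derivative_convergence_in_probability
    (d : ℕ) (hd : 1 ≤ d)
    (w : (Fin d → ℕ) → ℝ) (hw : ∀ α, 0 ≤ w α)
    (hwsum : Summable fun α : Fin d → ℕ => w α / mfact α ^ 2)
    (Ω : Type*) [MeasurableSpace Ω] (P : Measure Ω) [IsProbabilityMeasure P]
    (fstar : (Fin d → ℕ) → ℝ) (hfstar : memH w fstar)
    (fhat : ℕ → Ω → (Fin d → ℕ) → ℝ) (hfhat : ∀ n ω, memH w (fhat n ω))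
    (hconv : ∀ ε : ℝ, 0 < ε →
      Tendsto (fun n => P {ω | ε ≤ normH w (fhat n ω - fstar)}) atTop (𝓝 0)) :
    ∀ ξ : Fin d → ℝ, (∀ j, ξ j ∈ Set.Ioo (0:ℝ) 1) → ∀ i : Fin d, ∀ ε : ℝ, 0 < ε →
      Tendsto (fun n => P {ω | ε ≤ normH w (Dscale i ξ (fhat n ω) - Dscale i ξ fstar)})
        atTop (𝓝 0) := by
  intro ξ hξ i ε hε
  obtain ⟨hξ0, hξ1⟩ := hξ i
  have hM : (0:ℝ) < (1 - ξ i)⁻¹ := inv_pos.mpr (by linarith)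
  set M : ℝ := (1 - ξ i)⁻¹ with hMdef
  have key : ∀ n ω, normH w (Dscale i ξ (fhat n ω) - Dscale i ξ fstar)
      ≤ M * normH w (fhat n ω - fstar) := by
    intro n ω
    have hlin : Dscale i ξ (fhat n ω) - Dscale i ξ fstar
        = Dscale i ξ (fhat n ω - fstar) := by
      funext α
      simp only [Pi.sub_apply, Dscale]
      ring
    rw [hlin]
    exact normH_Dscale_le w hw ξ hξ i _
      (summable_sub_aux w hw _ _ (hfhat n ω) hfstar)
  have hsub : ∀ n, {ω | ε ≤ normH w (Dscale i ξ (fhat n ω) - Dscale i ξ fstar)}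
      ⊆ {ω | ε / M ≤ normH w (fhat n ω - fstar)} := by
    intro n ω hω
    simp only [Set.mem_setOf_eq] at *
    rw [div_le_iff₀' hM]
    exact hω.trans (key n ω)
  have h0 := hconv (ε / M) (div_pos hε hM)
  exact tendsto_of_tendsto_of_tendsto_of_le_of_le tendsto_const_nhds h0
    (fun n => zero_le) (fun n => measure_mono (hsub n))
end
end

section
/- Lemma B.2, equation (6) (norm continuity of the scaling map). For every c ∈ H, every ξ ∈ (0,1)^d and every i ∈ Fin d, lim_{t→0} ‖S_{ξ + t·e_i} c − S_ξ c‖ = 0, where e_i denotes the i-th standard unit vector of ℝ^d and t ranges over values small enough that ξ + t·e_i ∈ (0,1)^d. -/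
open MeasureTheory Filter Topology

noncomputable section

/-- Lemma B.2, equation (6): norm continuity of the scaling map. For `c ∈ H`,
`ξ ∈ (0,1)^d` and a coordinate `i`, `‖S_{ξ + t·e_i} c − S_ξ c‖ → 0` as `t → 0`,
where `t` ranges over values with `ξ + t·e_i ∈ (0,1)^d`. -/
theorem scaling_map_norm_continuity
    (d : ℕ) (hd : 1 ≤ d)
    (w : (Fin d → ℕ) → ℝ) (hw : ∀ α, 0 ≤ w α)
    (hwsum : Summable fun α : Fin d → ℕ => w α / mfact α ^ 2)
    (c : (Fin d → ℕ) → ℝ) (hc : memH w c)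
    (ξ : Fin d → ℝ) (hξ : ∀ j, ξ j ∈ Set.Ioo (0:ℝ) 1) (i : Fin d) :
    Tendsto
      (fun t : ℝ => normH w (Sscale (Function.update ξ i (ξ i + t)) c - Sscale ξ c))
      (𝓝[{t : ℝ | ∀ j, Function.update ξ i (ξ i + t) j ∈ Set.Ioo (0:ℝ) 1}] 0)
      (𝓝 0) := by
  have key : Tendsto
      (fun t : ℝ => innerH w (Sscale (Function.update ξ i (ξ i + t)) c - Sscale ξ c)
        (Sscale (Function.update ξ i (ξ i + t)) c - Sscale ξ c))
      (𝓝[{t : ℝ | ∀ j, Function.update ξ i (ξ i + t) j ∈ Set.Ioo (0:ℝ) 1}] 0)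
      (𝓝 0) := by
    have h0 : (𝓝 (0:ℝ)) = 𝓝 (∑' _α : Fin d → ℕ, (0:ℝ)) := by simp
    rw [h0]
    unfold innerH
    apply tendsto_tsum_of_dominated_convergence
      (bound := fun α => mfact α ^ 2 * c α ^ 2 / w α) hc.2
    · intro α
      have hcont : Continuous (fun t : ℝ =>
          mfact α ^ 2 * ((Sscale (Function.update ξ i (ξ i + t)) c - Sscale ξ c) α)
            * ((Sscale (Function.update ξ i (ξ i + t)) c - Sscale ξ c) α) / w α) := by
        have hΔ : Continuous (fun t : ℝ =>
            (Sscale (Function.update ξ i (ξ i + t)) c - Sscale ξ c) α) := by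
          simp only [Sscale, Pi.sub_apply]
          apply Continuous.sub _ continuous_const
          apply Continuous.mul _ continuous_const
          apply continuous_finset_prod
          intro j _
          by_cases hj : j = i
          · subst hj
            simp only [Function.update_self]
            exact (continuous_const.add continuous_id).pow _
          · simp only [Function.update_of_ne hj]
            exact continuous_const
        exact ((continuous_const.mul hΔ).mul hΔ).div_const _
      have := (hcont.tendsto 0).mono_left
        (nhdsWithin_le_nhds (s := {t : ℝ | ∀ j, Function.update ξ i (ξ i + t) j ∈ Set.Ioo (0:ℝ) 1}))
      simpa [Sscale, Function.update_eq_self] using this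
    · filter_upwards [self_mem_nhdsWithin] with t ht
      intro α
      have hprod : ∀ (η : Fin d → ℝ), (∀ j, η j ∈ Set.Ioo (0:ℝ) 1) →
          (∏ j, η j ^ α j) ∈ Set.Icc (0:ℝ) 1 := by
        intro η hη
        constructor
        · exact Finset.prod_nonneg fun j _ => pow_nonneg (hη j).1.le _
        · exact Finset.prod_le_one (fun j _ => pow_nonneg (hη j).1.le _)
            (fun j _ => pow_le_one₀ (hη j).1.le (hη j).2.le)
      have h1 := hprod _ ht
      have h2 := hprod ξ hξ
      have hΔ : |(∏ j, (Function.update ξ i (ξ i + t)) j ^ α j) - ∏ j, ξ j ^ α j| ≤ 1 := by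
        rw [abs_sub_le_iff]
        constructor <;> linarith [h1.1, h1.2, h2.1, h2.2]
      have hΔsq : ((∏ j, (Function.update ξ i (ξ i + t)) j ^ α j) - ∏ j, ξ j ^ α j) ^ 2 ≤ 1 := by
        calc ((∏ j, (Function.update ξ i (ξ i + t)) j ^ α j) - ∏ j, ξ j ^ α j) ^ 2
            = |(∏ j, (Function.update ξ i (ξ i + t)) j ^ α j) - ∏ j, ξ j ^ α j| ^ 2 := by
              rw [sq_abs]
          _ ≤ 1 ^ 2 := by
              exact pow_le_pow_left₀ (abs_nonneg _) hΔ 2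
          _ = 1 := one_pow 2
      have hx : (Sscale (Function.update ξ i (ξ i + t)) c - Sscale ξ c) α
          = ((∏ j, (Function.update ξ i (ξ i + t)) j ^ α j) - ∏ j, ξ j ^ α j) * c α := by
        simp [Sscale, sub_mul]
      set Δ := (∏ j, (Function.update ξ i (ξ i + t)) j ^ α j) - ∏ j, ξ j ^ α j with hΔdef
      rw [hx]
      have hnum : mfact α ^ 2 * (Δ * c α) * (Δ * c α) / w α
          = mfact α ^ 2 * (Δ ^ 2 * c α ^ 2) / w α := by ring
      rw [Real.norm_eq_abs, hnum]
      have hmf : (0:ℝ) ≤ mfact α := Finset.prod_nonneg fun j _ => Nat.cast_nonneg _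
      have habs : |mfact α ^ 2 * (Δ ^ 2 * c α ^ 2) / w α|
          = mfact α ^ 2 * (Δ ^ 2 * c α ^ 2) / w α := by
        apply abs_of_nonneg
        apply div_nonneg _ (hw α)
        positivity
      rw [habs]
      rcases eq_or_lt_of_le (hw α) with hwz | hwp
      · rw [← hwz, div_zero, div_zero]
      · apply div_le_div_of_nonneg_right ?_ hwp.le
        have : Δ ^ 2 * c α ^ 2 ≤ 1 * c α ^ 2 :=
          mul_le_mul_of_nonneg_right hΔsq (sq_nonneg _)
        nlinarith [sq_nonneg (mfact α), sq_nonneg (c α)]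
  have := (Real.continuous_sqrt.tendsto 0).comp key
  simp only [Function.comp, Real.sqrt_zero] at this
  exact this
end
end

section
/- Lemma B.2, equation (7) (norm differentiability of the scaling map). For every c ∈ H, every ξ ∈ (0,1)^d and every i ∈ Fin d, lim_{t→0} ‖ (S_{ξ + t·e_i} c − S_ξ c)/t − D_i(ξ) c ‖ = 0, where e_i denotes the i-th standard unit vector of ℝ^d and t ranges over nonzero values small enough that ξ + t·e_i ∈ (0,1)^d. -/
open MeasureTheory Filter Topology

noncomputable section

lemma taylor_bound (a b ρ : ℝ) (hρ : 0 < ρ) (ha : |a| ≤ ρ) (hb : |b| ≤ ρ) (n : ℕ) :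
    |a ^ n - b ^ n - n * b ^ (n - 1) * (a - b)| ≤ (n : ℝ) ^ 2 * ρ ^ n / ρ ^ 2 * (a - b) ^ 2 := by
  induction n with
  | zero => simp
  | succ n ih =>
    match n, ih with
    | 0, _ =>
      norm_num
      positivity
    | (m + 1), ih =>
      set n := m + 1 with hn
      have key : a ^ (n + 1) - b ^ (n + 1) - (↑(n + 1) : ℝ) * b ^ (n + 1 - 1) * (a - b)
          = a * (a ^ n - b ^ n - (n : ℝ) * b ^ (n - 1) * (a - b))
            + (n : ℝ) * b ^ (n - 1) * (a - b) ^ 2 := by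
        simp only [hn]
        push_cast
        ring
      rw [key]
      have h1 : |a * (a ^ n - b ^ n - (n : ℝ) * b ^ (n - 1) * (a - b))|
          ≤ ρ * ((n : ℝ) ^ 2 * ρ ^ n / ρ ^ 2 * (a - b) ^ 2) := by
        rw [abs_mul]
        apply mul_le_mul ha ih (abs_nonneg _) hρ.le
      have h2 : |(n : ℝ) * b ^ (n - 1) * (a - b) ^ 2|
          ≤ (n : ℝ) * ρ ^ (n - 1) * (a - b) ^ 2 := by
        have e : |(n : ℝ) * b ^ (n - 1) * (a - b) ^ 2|
            = (n : ℝ) * |b| ^ (n - 1) * (a - b) ^ 2 := by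
          simp [abs_mul, abs_pow, Nat.abs_cast, sq_abs]
        rw [e]
        gcongr
      have hm : n - 1 = m := rfl
      have hρn : ρ ^ n = ρ ^ m * ρ := by rw [hn]; ring
      have hρn1 : ρ ^ (n + 1) = ρ ^ m * ρ ^ 2 := by rw [hn]; ring
      have hnn : (0:ℝ) ≤ (a - b) ^ 2 := sq_nonneg _
      have hρne : ρ ≠ 0 := hρ.ne'
      have e1 : ρ * ((n : ℝ) ^ 2 * ρ ^ n / ρ ^ 2 * (a - b) ^ 2)
          = (n : ℝ) ^ 2 * (ρ ^ m * (a - b) ^ 2) := by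
        rw [hρn]; field_simp
      have e2 : (↑(n + 1) : ℝ) ^ 2 * ρ ^ (n + 1) / ρ ^ 2 * (a - b) ^ 2
          = (↑(n + 1) : ℝ) ^ 2 * (ρ ^ m * (a - b) ^ 2) := by
        rw [hρn1]; field_simp
      have e3 : (n : ℝ) * ρ ^ (n - 1) * (a - b) ^ 2 = (n : ℝ) * (ρ ^ m * (a - b) ^ 2) := by
        rw [hm]; ring
      have hcoef : (n : ℝ) ^ 2 + n ≤ (↑(n + 1) : ℝ) ^ 2 := by push_cast; nlinarith [Nat.cast_nonneg (α := ℝ) n]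
      have hpm : (0:ℝ) ≤ ρ ^ m * (a - b) ^ 2 := by positivity
      have habs := abs_add_le (a * (a ^ n - b ^ n - (n : ℝ) * b ^ (n - 1) * (a - b)))
        ((n : ℝ) * b ^ (n - 1) * (a - b) ^ 2)
      have hfin : ρ * ((n : ℝ) ^ 2 * ρ ^ n / ρ ^ 2 * (a - b) ^ 2)
          + (n : ℝ) * ρ ^ (n - 1) * (a - b) ^ 2
          ≤ (↑(n + 1) : ℝ) ^ 2 * ρ ^ (n + 1) / ρ ^ 2 * (a - b) ^ 2 := by
        rw [e1, e3, e2, ← add_mul]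
        exact mul_le_mul_of_nonneg_right hcoef hpm
      linarith [habs, h1, h2, hfin]

/-- Lemma B.2, equation (7): norm differentiability of the scaling map. For `c ∈ H`,
`ξ ∈ (0,1)^d` and a coordinate `i`,
`‖(S_{ξ + t·e_i} c − S_ξ c)/t − D_i(ξ)c‖ → 0` as `t → 0`, where `t` ranges over
nonzero values with `ξ + t·e_i ∈ (0,1)^d`. -/
theorem scaling_map_norm_differentiability
    (d : ℕ) (hd : 1 ≤ d)
    (w : (Fin d → ℕ) → ℝ) (hw : ∀ α, 0 ≤ w α)
    (hwsum : Summable fun α : Fin d → ℕ => w α / mfact α ^ 2)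
    (c : (Fin d → ℕ) → ℝ) (hc : memH w c)
    (ξ : Fin d → ℝ) (hξ : ∀ j, ξ j ∈ Set.Ioo (0:ℝ) 1) (i : Fin d) :
    Tendsto
      (fun t : ℝ =>
        normH w (t⁻¹ • (Sscale (Function.update ξ i (ξ i + t)) c - Sscale ξ c) - Dscale i ξ c))
      (𝓝[{t : ℝ | t ≠ 0 ∧ ∀ j, Function.update ξ i (ξ i + t) j ∈ Set.Ioo (0:ℝ) 1}] 0)
      (𝓝 0) := by
  obtain ⟨hc0, hcs⟩ := hc
  have hb0 : 0 < ξ i := (hξ i).1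
  have hb1 : ξ i < 1 := (hξ i).2
  set ρ : ℝ := (1 + ξ i) / 2 with hρdef
  have hρ0 : 0 < ρ := by simp only [hρdef]; linarith
  have hρ1 : ρ < 1 := by simp only [hρdef]; linarith
  have hbρ : ξ i ≤ ρ := by simp only [hρdef]; linarith
  set δ : ℝ := (1 - ξ i) / 2 with hδdef
  have hδ0 : 0 < δ := by simp only [hδdef]; linarith
  obtain ⟨C, hC⟩ := (tendsto_pow_const_mul_const_pow_of_lt_one 2 hρ0.le hρ1).bddAbove_range
  have hCb : ∀ n : ℕ, (n : ℝ) ^ 2 * ρ ^ n ≤ C := fun n => hC ⟨n, rfl⟩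
  have hC0 : (0:ℝ) ≤ C := by have := hCb 0; simpa using this
  -- summability of the comparison series
  have hsumcc : Summable (fun α : Fin d → ℕ => mfact α ^ 2 * c α * c α / w α) := by
    refine hcs.congr fun α => ?_
    ring
  have hncc : ∀ α : Fin d → ℕ, 0 ≤ mfact α ^ 2 * c α * c α / w α := by
    intro α
    have h : mfact α ^ 2 * c α * c α = (mfact α * c α) ^ 2 := by ring
    rw [h]
    exact div_nonneg (sq_nonneg _) (hw α)
  have hinncc : 0 ≤ innerH w c c := tsum_nonneg hncc
  set K : ℝ := C / ρ ^ 2 * normH w c with hKdef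
  have hnormc : 0 ≤ normH w c := Real.sqrt_nonneg _
  -- the main pointwise bound
  have hmain : ∀ t : ℝ, t ≠ 0 →
      (∀ j, Function.update ξ i (ξ i + t) j ∈ Set.Ioo (0:ℝ) 1) → |t| < δ →
      normH w (t⁻¹ • (Sscale (Function.update ξ i (ξ i + t)) c - Sscale ξ c) - Dscale i ξ c)
        ≤ K * |t| := by
    intro t ht hts htδ
    set L : ℝ := C / ρ ^ 2 * |t| with hLdef
    have hL0 : 0 ≤ L := by positivity
    set v : (Fin d → ℕ) → ℝ :=
      t⁻¹ • (Sscale (Function.update ξ i (ξ i + t)) c - Sscale ξ c) - Dscale i ξ c with hvdef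
    clear_value v
    have haIoo : ξ i + t ∈ Set.Ioo (0:ℝ) 1 := by
      have := hts i
      rwa [Function.update_self] at this
    have haρ : |ξ i + t| ≤ ρ := by
      rw [abs_of_nonneg haIoo.1.le]
      have : t ≤ |t| := le_abs_self t
      simp only [hρdef]
      simp only [hδdef] at htδ
      linarith
    have hbρ' : |ξ i| ≤ ρ := by rw [abs_of_nonneg hb0.le]; exact hbρ
    -- pointwise formula and bound
    have hvbound : ∀ α : Fin d → ℕ, |v α| ≤ L * |c α| := by
      intro α
      set n := α i with hn
      set P : ℝ := ∏ j ∈ Finset.univ.erase i, ξ j ^ α j with hPdef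
      have hP1 : (∏ j, ξ j ^ α j) = ξ i ^ n * P :=
        (Finset.mul_prod_erase Finset.univ _ (Finset.mem_univ i)).symm
      have hP2 : (∏ j, (Function.update ξ i (ξ i + t)) j ^ α j) = (ξ i + t) ^ n * P := by
        rw [← Finset.mul_prod_erase Finset.univ
          (fun j => (Function.update ξ i (ξ i + t)) j ^ α j) (Finset.mem_univ i)]
        rw [Function.update_self]
        congr 1
        refine Finset.prod_congr rfl fun j hj => ?_
        rw [Function.update_of_ne (Finset.ne_of_mem_erase hj)]
      have hv : v α = t⁻¹ * (((ξ i + t) ^ n - ξ i ^ n - (n : ℝ) * ξ i ^ (n - 1) * t)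
          * (P * c α)) := by
        simp only [hvdef, Pi.sub_apply, Pi.smul_apply, smul_eq_mul, Sscale, Dscale]
        rw [hP2, hP1]
        field_simp
        ring
      have hP0 : 0 ≤ P := by
        refine Finset.prod_nonneg fun j _ => ?_
        exact pow_nonneg (hξ j).1.le _
      have hP1' : P ≤ 1 := by
        refine Finset.prod_le_one (fun j _ => pow_nonneg (hξ j).1.le _) fun j _ => ?_
        exact pow_le_one₀ (hξ j).1.le (hξ j).2.le
      have htb := taylor_bound (ξ i + t) (ξ i) ρ hρ0 haρ hbρ' n
      have hsub : ξ i + t - ξ i = t := by ring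
      rw [hsub] at htb
      have htb' : |(ξ i + t) ^ n - ξ i ^ n - (n : ℝ) * ξ i ^ (n - 1) * t|
          ≤ C / ρ ^ 2 * t ^ 2 := by
        refine htb.trans ?_
        have h1 : (n : ℝ) ^ 2 * ρ ^ n / ρ ^ 2 ≤ C / ρ ^ 2 :=
          div_le_div_of_nonneg_right (hCb n) (by positivity) |>.trans_eq rfl
        have h2 : (n : ℝ) ^ 2 * ρ ^ n / ρ ^ 2 ≤ C / ρ ^ 2 := by
          apply div_le_div_of_nonneg_right (hCb n)
          positivity
        exact mul_le_mul_of_nonneg_right h2 (sq_nonneg t)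
      calc |v α| = |t|⁻¹ * (|(ξ i + t) ^ n - ξ i ^ n - (n : ℝ) * ξ i ^ (n - 1) * t|
            * (|P| * |c α|)) := by
            rw [hv, abs_mul, abs_mul, abs_mul, abs_inv]
        _ ≤ |t|⁻¹ * ((C / ρ ^ 2 * t ^ 2) * (1 * |c α|)) := by
            gcongr
            rw [abs_of_nonneg hP0]; exact hP1'
        _ = L * |c α| := by
            have hta : |t| ≠ 0 := abs_ne_zero.mpr ht
            have ht2 : t ^ 2 = |t| * |t| := by rw [sq, ← abs_mul_abs_self]
            rw [hLdef, ht2]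
            field_simp
    -- termwise comparison of the norm series
    have hterm : ∀ α : Fin d → ℕ,
        mfact α ^ 2 * v α * v α / w α ≤ L ^ 2 * (mfact α ^ 2 * c α * c α / w α) := by
      intro α
      have hv2 : v α * v α ≤ L ^ 2 * (c α * c α) := by
        have h1 : v α * v α = |v α| * |v α| := (abs_mul_abs_self _).symm
        have h2 : (L * |c α|) * (L * |c α|) = L ^ 2 * (c α * c α) := by
          have : |c α| * |c α| = c α * c α := abs_mul_abs_self _
          nlinarith [this]
        rw [h1, ← h2]
        exact mul_le_mul (hvbound α) (hvbound α) (abs_nonneg _)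
          (le_trans (abs_nonneg _) (hvbound α))
      by_cases hwα : w α = 0
      · rw [hwα]
        simp
      · have hwpos : 0 < w α := (hw α).lt_of_ne (Ne.symm hwα)
        rw [← mul_div_assoc]
        refine div_le_div_of_nonneg_right ?_ hwpos.le
        calc mfact α ^ 2 * v α * v α = mfact α ^ 2 * (v α * v α) := by ring
          _ ≤ mfact α ^ 2 * (L ^ 2 * (c α * c α)) :=
              mul_le_mul_of_nonneg_left hv2 (sq_nonneg _)
          _ = L ^ 2 * (mfact α ^ 2 * c α * c α) := by ring
    have hsumsmall : Summable (fun α : Fin d → ℕ => mfact α ^ 2 * v α * v α / w α) := by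
      refine Summable.of_nonneg_of_le (fun α => ?_) hterm (hsumcc.mul_left (L ^ 2))
      have h : mfact α ^ 2 * v α * v α = (mfact α * v α) ^ 2 := by ring
      rw [h]
      exact div_nonneg (sq_nonneg _) (hw α)
    have hinner : innerH w v v ≤ L ^ 2 * innerH w c c := by
      unfold innerH
      rw [← tsum_mul_left]
      exact Summable.tsum_le_tsum hterm hsumsmall (hsumcc.mul_left _)
    calc normH w v = Real.sqrt (innerH w v v) := rfl
      _ ≤ Real.sqrt (L ^ 2 * innerH w c c) := Real.sqrt_le_sqrt hinner
      _ = L * normH w c := by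
          rw [Real.sqrt_mul (sq_nonneg L), Real.sqrt_sq hL0]
          rfl
      _ = K * |t| := by rw [hLdef, hKdef]; ring
  -- conclude by squeezing
  apply squeeze_zero' (Eventually.of_forall fun t => Real.sqrt_nonneg _)
  · have h2 : ∀ᶠ t : ℝ in 𝓝 0, |t| < δ := by
      have := eventually_abs_sub_lt (0:ℝ) hδ0
      simpa using this
    filter_upwards [eventually_mem_nhdsWithin, h2.filter_mono nhdsWithin_le_nhds]
      with t hts htδ
    exact hmain t hts.1 hts.2 htδ
  · have h : Tendsto (fun t : ℝ => K * |t|) (𝓝 0) (𝓝 0) := by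
      have h0 : Continuous (fun t : ℝ => K * |t|) := continuous_const.mul continuous_abs
      have := h0.tendsto (0:ℝ)
      simpa using this
    exact h.mono_left nhdsWithin_le_nhds
end
end
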